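/- arXiv:1004.0224 — 4 statements merged into one kernel-verified Lean document; each statement's English description precedes it below -/
import Mathlib

section
/- For a CM-type Φ = {φ₁,…,φ_N} of K, the map r_Φ : G → Ind defined by r_Φ(τ)(φᵢH₀) = 0 if τ⁻¹φᵢ ∈ Φ and r_Φ(τ)(φᵢH₀) = 1 otherwise is a 1-cocycle, i.e. r_Φ(τ₁τ₂) = r_Φ(τ₁) + τ₁·r_Φ(τ₂) for all τ₁, τ₂ ∈ G, and its restriction to C equals the map r. -/
/- Common combinatorial skeleton for the Galois-theoretic setting of the paper:
`G = Gal(K^c/ℚ)`, `H = Gal(K^c/K)`, `H₀ = Gal(K^c/K₀)`, `ι` the complex conjugation.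
Embeddings `K ↪ ℂ` correspond to left cosets `G ⧸ H`, embeddings `K₀ ↪ ℂ` to `G ⧸ H₀`. -/

open Pointwise
open scoped Classical

variable {G : Type} [Group G]

/-- A CM-type of `K`: a set `Φ` of embeddings `K ↪ ℂ` (i.e. of cosets in `G ⧸ H`) such that
`Φ` and `ιΦ` are disjoint and every embedding lies in `Φ ∪ ιΦ`. -/
def IsCMType (H : Subgroup G) (ι : G) (Φ : Set (G ⧸ H)) : Prop :=
  (∀ φ ∈ Φ, ι • φ ∉ Φ) ∧ ∀ φ : G ⧸ H, φ ∈ Φ ∨ ι • φ ∈ Φ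

/-- `S_Φ = ⋃_{φ ∈ Φ} φH ⊆ G`. -/
def SPhi (H : Subgroup G) (Φ : Set (G ⧸ H)) : Set G := {g : G | (g : G ⧸ H) ∈ Φ}

/-- `H̃(Φ) = {σ ∈ G : σ S_Φ = S_Φ}`. -/
def Htilde (H : Subgroup G) (Φ : Set (G ⧸ H)) : Subgroup G := MulAction.stabilizer G (SPhi H Φ)

/-- The natural projection `G ⧸ H → G ⧸ H₀` (restriction of embeddings of `K` to `K₀`). -/
def proj (H H₀ : Subgroup G) (h : H ≤ H₀) : G ⧸ H → G ⧸ H₀ :=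
  Quotient.map' id fun a b hab => by
    rw [QuotientGroup.leftRel_apply] at *
    exact h hab

open Classical in
/-- The 1-cocycle `r_Φ : G → Ind`, `r_Φ(τ)(φᵢH₀) = 0` iff `τ⁻¹φᵢ ∈ Φ`, where `φᵢ` is the
unique member of `Φ` lying over the coset `φᵢH₀`. -/
noncomputable def rPhi (H H₀ : Subgroup G) (h : H ≤ H₀) (Φ : Set (G ⧸ H)) (τ : G) :
    (G ⧸ H₀) → ZMod 2 :=
  fun x => if ∃ φ ∈ Φ, proj H H₀ h φ = x ∧ τ⁻¹ • φ ∈ Φ then 0 else 1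

/-- The action of `G` on `Ind = Map(G/H₀, ℤ/2ℤ)`, `(σ·f)(τH₀) = f(σ⁻¹τH₀)`. -/
def indAct (H₀ : Subgroup G) (σ : G) (f : (G ⧸ H₀) → ZMod 2) : (G ⧸ H₀) → ZMod 2 :=
  fun x => f (σ⁻¹ • x)

/-- For `f ∈ Ind`, the CM-type `Φ_f = {ι^{f(φ₁H₀)}φ₁, …, ι^{f(φ_NH₀)}φ_N}` attached to a fixed
CM-type `Φ₀`. -/
noncomputable def PhiF (H H₀ : Subgroup G) (h : H ≤ H₀) (ι : G) (Φ₀ : Set (G ⧸ H))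
    (f : (G ⧸ H₀) → ZMod 2) : Set (G ⧸ H) :=
  (fun φ => ι ^ (f (proj H H₀ h φ)).val • φ) '' Φ₀

/-- The `*`-action of `G` on `Ind`: `τ * f := r_{Φ₀}(τ) + τ·f`. -/
noncomputable def starAct (H H₀ : Subgroup G) (h : H ≤ H₀) (Φ₀ : Set (G ⧸ H)) (τ : G)
    (f : (G ⧸ H₀) → ZMod 2) : (G ⧸ H₀) → ZMod 2 :=
  rPhi H H₀ h Φ₀ τ + indAct H₀ τ f

/-- The map `r : C → Ind` attached to a totally positive `d ∈ K₀` with `K = K₀(√−d)`: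
`r(a)(φᵢH₀) = 0` if `a(√(−φᵢ(d))) = √(−φᵢ(d))` and `r(a)(φᵢH₀) = 1` otherwise. -/
noncomputable def rmap {Kc : Type} [Field Kc] [Algebra ℚ Kc]
    (K₀ : IntermediateField ℚ Kc) (d : Kc) (a : Kc ≃ₐ[ℚ] Kc)
    (x : (Kc ≃ₐ[ℚ] Kc) ⧸ K₀.fixingSubgroup) : ZMod 2 :=
  if ∀ τ : Kc ≃ₐ[ℚ] Kc, (τ : (Kc ≃ₐ[ℚ] Kc) ⧸ K₀.fixingSubgroup) = x →
      ∀ s : Kc, s ^ 2 = -(τ d) → a s = s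
  then 0 else 1

section AuxHelpers

variable {G : Type} [Group G]

lemma aux_proj_coe (H H₀ : Subgroup G) (h : H ≤ H₀) (a : G) :
    proj H H₀ h ((a : G ⧸ H)) = (a : G ⧸ H₀) := rfl

lemma aux_smul_coe (H : Subgroup G) (g a : G) :
    g • ((a : G ⧸ H)) = ((g * a : G) : G ⧸ H) := rfl

lemma aux_proj_smul (H H₀ : Subgroup G) (h : H ≤ H₀) (g : G) (φ : G ⧸ H) :
    proj H H₀ h (g • φ) = g • proj H H₀ h φ := by
  obtain ⟨a, rfl⟩ := QuotientGroup.mk_surjective φ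
  rfl

lemma aux_fiber_eq (H H₀ : Subgroup G) (h : H ≤ H₀) {ι : G} (hι2 : ι * ι = 1)
    (hcent : ∀ g : G, g * ι = ι * g) (hcos : ∀ g ∈ H₀, g ∈ H ∨ ι * g ∈ H)
    {φ ψ : G ⧸ H} (hp : proj H H₀ h φ = proj H H₀ h ψ) :
    ψ = φ ∨ ψ = ι • φ := by
  have hιinv : ι⁻¹ = ι := inv_eq_of_mul_eq_one_right hι2
  obtain ⟨a, rfl⟩ := QuotientGroup.mk_surjective φ
  obtain ⟨b, rfl⟩ := QuotientGroup.mk_surjective ψ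
  rw [aux_proj_coe, aux_proj_coe] at hp
  rcases hcos _ (QuotientGroup.eq.mp hp) with hH | hH
  · exact Or.inl (QuotientGroup.eq.mpr hH).symm
  · right
    rw [aux_smul_coe]
    have h2 : (ι * (a⁻¹ * b))⁻¹ = b⁻¹ * (ι * a) := by
      rw [mul_inv_rev, mul_inv_rev, inv_inv, hιinv, mul_assoc, hcent a]
    exact QuotientGroup.eq.mpr (h2 ▸ inv_mem hH)

lemma aux_iota_smul_eq (H₀ : Subgroup G) {ι : G}
    (hcent : ∀ g : G, g * ι = ι * g) (hιH₀ : ι ∈ H₀) (x : G ⧸ H₀) : ι • x = x := by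
  obtain ⟨a, rfl⟩ := QuotientGroup.mk_surjective x
  rw [aux_smul_coe]
  have hc : ι⁻¹ * a = a * ι⁻¹ := by
    have h := hcent a
    calc ι⁻¹ * a = ι⁻¹ * (a * ι) * ι⁻¹ := by group
      _ = ι⁻¹ * (ι * a) * ι⁻¹ := by rw [h]
      _ = a * ι⁻¹ := by group
  have h1 : (ι * a)⁻¹ * a = ι⁻¹ := by
    rw [mul_inv_rev, mul_assoc, hc, ← mul_assoc, inv_mul_cancel, one_mul]
  exact QuotientGroup.eq.mpr (h1 ▸ inv_mem hιH₀)

lemma aux_cm_mem_iff {H : Subgroup G} {ι : G} {Φ : Set (G ⧸ H)}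
    (hΦ : IsCMType H ι Φ) (φ : G ⧸ H) : ι • φ ∈ Φ ↔ φ ∉ Φ := by
  constructor
  · intro h1 h2
    exact hΦ.1 φ h2 h1
  · intro h1
    rcases hΦ.2 φ with h | h
    · exact absurd h h1
    · exact h

lemma aux_exists_over {H H₀ : Subgroup G} (h : H ≤ H₀) {ι : G} {Φ : Set (G ⧸ H)}
    (hΦ : IsCMType H ι Φ) (hcent : ∀ g : G, g * ι = ι * g) (hιH₀ : ι ∈ H₀)
    (x : G ⧸ H₀) : ∃ φ ∈ Φ, proj H H₀ h φ = x := by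
  obtain ⟨a, rfl⟩ := QuotientGroup.mk_surjective x
  rcases hΦ.2 ((a : G ⧸ H)) with hm | hm
  · exact ⟨_, hm, rfl⟩
  · exact ⟨_, hm, by
      rw [aux_proj_smul, aux_proj_coe, aux_iota_smul_eq H₀ hcent hιH₀]⟩

lemma aux_unique_over {H H₀ : Subgroup G} (h : H ≤ H₀) {ι : G} {Φ : Set (G ⧸ H)}
    (hΦ : IsCMType H ι Φ) (hι2 : ι * ι = 1) (hcent : ∀ g : G, g * ι = ι * g)
    (hcos : ∀ g ∈ H₀, g ∈ H ∨ ι * g ∈ H)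
    {φ ψ : G ⧸ H} (hφ : φ ∈ Φ) (hψ : ψ ∈ Φ)
    (hp : proj H H₀ h φ = proj H H₀ h ψ) : ψ = φ := by
  rcases aux_fiber_eq H H₀ h hι2 hcent hcos hp with h1 | h1
  · exact h1
  · rw [h1] at hψ
    exact absurd hψ (hΦ.1 φ hφ)

lemma aux_rPhi_eq {H H₀ : Subgroup G} {h : H ≤ H₀} {ι : G} {Φ : Set (G ⧸ H)}
    (hΦ : IsCMType H ι Φ) (hι2 : ι * ι = 1) (hcent : ∀ g : G, g * ι = ι * g)
    (hcos : ∀ g ∈ H₀, g ∈ H ∨ ι * g ∈ H)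
    {x : G ⧸ H₀} {φ : G ⧸ H} (hφ : φ ∈ Φ) (hpr : proj H H₀ h φ = x) (τ : G) :
    rPhi H H₀ h Φ τ x = if τ⁻¹ • φ ∈ Φ then 0 else 1 := by
  unfold rPhi
  refine if_congr ?_ rfl rfl
  constructor
  · rintro ⟨ψ, hψ, hpψ, hm⟩
    have he : ψ = φ := aux_unique_over h hΦ hι2 hcent hcos hφ hψ (by rw [hpr, hpψ])
    rwa [he] at hm
  · intro hm
    exact ⟨φ, hφ, hpr, hm⟩

/-- The fixed points of a `ℚ`-algebra automorphism, as an intermediate field. -/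
def fixedPts {Kc : Type} [Field Kc] [Algebra ℚ Kc] (g : Kc ≃ₐ[ℚ] Kc) :
    IntermediateField ℚ Kc where
  carrier := {x | g x = x}
  mul_mem' := fun {a b} ha hb => by
    simp only [Set.mem_setOf_eq, map_mul] at *
    rw [ha, hb]
  one_mem' := map_one g
  add_mem' := fun {a b} ha hb => by
    simp only [Set.mem_setOf_eq, map_add] at *
    rw [ha, hb]
  zero_mem' := map_zero g
  algebraMap_mem' := fun r => g.commutes r
  inv_mem' := fun a ha => by
    simp only [Set.mem_setOf_eq, map_inv₀] at *
    rw [ha]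

lemma mem_fixedPts {Kc : Type} [Field Kc] [Algebra ℚ Kc] (g : Kc ≃ₐ[ℚ] Kc) (x : Kc) :
    x ∈ fixedPts g ↔ g x = x := Iff.rfl

end AuxHelpers

/-- For a CM-type `Φ` of `K`, the map `r_Φ : G → Ind` with
`r_Φ(τ)(φᵢH₀) = 0` iff `τ⁻¹φᵢ ∈ Φ` is a 1-cocycle, i.e.
`r_Φ(τ₁τ₂) = r_Φ(τ₁) + τ₁·r_Φ(τ₂)` for all `τ₁, τ₂ ∈ G`, and its restriction to
`C = Gal(K^c/K₀^c)` equals the map `r`. -/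
theorem rPhi_cocycle_and_restriction
    (Kc : Type) [Field Kc] [NumberField Kc] [IsGalois ℚ Kc]
    (K₀ K : IntermediateField ℚ Kc) (hle : K₀ ≤ K)
    (hfixle : K.fixingSubgroup ≤ K₀.fixingSubgroup)
    (htr : ∀ σ : Kc →+* ℂ, ∀ x ∈ K₀, (σ x).im = 0)
    (hti : ∀ σ : Kc →+* ℂ, ∃ x ∈ K, (σ x).im ≠ 0)
    (hdeg : Module.finrank ℚ K = 2 * Module.finrank ℚ K₀)
    (hgal : IntermediateField.normalClosure ℚ ↥K Kc = ⊤)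
    (d : Kc) (hd : d ∈ K₀)
    (hdpos : ∀ σ : Kc →+* ℂ, 0 < (σ d).re ∧ (σ d).im = 0)
    (hKd : ∃ s : Kc, s ^ 2 = -d ∧ K = K₀ ⊔ IntermediateField.adjoin ℚ {s})
    -- the complex conjugation `ι`: a central element of order 2 of `G`, not fixing `K`
    (ι : Kc ≃ₐ[ℚ] Kc) (hι2 : ι * ι = 1) (hι1 : ι ≠ 1)
    (hcent : ∀ g : Kc ≃ₐ[ℚ] Kc, g * ι = ι * g)
    (hιH : ι ∉ K.fixingSubgroup) (hιH₀ : ι ∈ K₀.fixingSubgroup)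
    -- a CM-type of `K`
    (Φ : Set ((Kc ≃ₐ[ℚ] Kc) ⧸ K.fixingSubgroup)) (hΦ : IsCMType K.fixingSubgroup ι Φ) :
    (∀ τ₁ τ₂ : Kc ≃ₐ[ℚ] Kc,
        rPhi K.fixingSubgroup K₀.fixingSubgroup hfixle Φ (τ₁ * τ₂) =
          rPhi K.fixingSubgroup K₀.fixingSubgroup hfixle Φ τ₁ +
            indAct K₀.fixingSubgroup τ₁
              (rPhi K.fixingSubgroup K₀.fixingSubgroup hfixle Φ τ₂)) ∧
    (∀ a ∈ (IntermediateField.normalClosure ℚ ↥K₀ Kc).fixingSubgroup,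
        rPhi K.fixingSubgroup K₀.fixingSubgroup hfixle Φ a = rmap K₀ d a) := by
  classical
  obtain ⟨s₀, hs₀sq, hKeq⟩ := hKd
  have hs₀K : s₀ ∈ K := by
    rw [hKeq]
    exact SetLike.le_def.mp le_sup_right (IntermediateField.mem_adjoin_simple_self ℚ s₀)
  -- behaviour of automorphisms fixing `d` on square roots of `-d`
  have hsq : ∀ g : Kc ≃ₐ[ℚ] Kc, g d = d → g s₀ = s₀ ∨ g s₀ = -s₀ := by
    intro g hgd
    have h1 : g s₀ * g s₀ = s₀ * s₀ := by
      have h2 : g s₀ ^ 2 = s₀ ^ 2 := by rw [← map_pow, hs₀sq, map_neg, hgd]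
      simpa [sq] using h2
    exact mul_self_eq_mul_self_iff.mp h1
  -- an automorphism fixing `K₀` and `s₀` fixes `K`
  have key : ∀ g : Kc ≃ₐ[ℚ] Kc, g ∈ K₀.fixingSubgroup → g s₀ = s₀ → g ∈ K.fixingSubgroup := by
    intro g hg0 hgs
    rw [IntermediateField.mem_fixingSubgroup_iff]
    intro y hy
    have hK_le : K ≤ fixedPts g := by
      rw [hKeq]
      apply sup_le
      · intro z hz
        exact (IntermediateField.mem_fixingSubgroup_iff _ _).mp hg0 z hz
      · rw [IntermediateField.adjoin_le_iff]
        intro z hz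
        rw [Set.mem_singleton_iff] at hz
        subst hz
        exact hgs
    exact hK_le hy
  have hd_fix : ∀ g : Kc ≃ₐ[ℚ] Kc, g ∈ K₀.fixingSubgroup → g d = d :=
    fun g hg => (IntermediateField.mem_fixingSubgroup_iff K₀ g).mp hg d hd
  have hιs : ι s₀ = -s₀ := by
    rcases hsq ι (hd_fix ι hιH₀) with h1 | h1
    · exact absurd (key ι hιH₀ h1) hιH
    · exact h1
  have hcos : ∀ g ∈ K₀.fixingSubgroup, g ∈ K.fixingSubgroup ∨ ι * g ∈ K.fixingSubgroup := by
    intro g hg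
    rcases hsq g (hd_fix g hg) with h1 | h1
    · exact Or.inl (key g hg h1)
    · refine Or.inr (key (ι * g) (mul_mem hιH₀ hg) ?_)
      rw [AlgEquiv.mul_apply, h1, map_neg, hιs, neg_neg]
  constructor
  · -- the cocycle identity
    intro τ₁ τ₂
    funext x
    obtain ⟨φ, hφ, hpr⟩ := aux_exists_over hfixle hΦ hcent hιH₀ x
    have hpr2 : proj _ _ hfixle (τ₁⁻¹ • φ) = τ₁⁻¹ • x := by
      rw [aux_proj_smul, hpr]
    simp only [Pi.add_apply, indAct]
    rw [aux_rPhi_eq hΦ hι2 hcent hcos hφ hpr (τ₁ * τ₂),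
        aux_rPhi_eq hΦ hι2 hcent hcos hφ hpr τ₁]
    have he : (τ₁ * τ₂)⁻¹ • φ = τ₂⁻¹ • τ₁⁻¹ • φ := by rw [mul_inv_rev, mul_smul]
    by_cases hq : τ₁⁻¹ • φ ∈ Φ
    · rw [aux_rPhi_eq hΦ hι2 hcent hcos hq hpr2 τ₂, if_pos hq, he]
      simp
    · have hq' : ι • (τ₁⁻¹ • φ) ∈ Φ := (aux_cm_mem_iff hΦ _).mpr hq
      have hpr3 : proj _ _ hfixle (ι • (τ₁⁻¹ • φ)) = τ₁⁻¹ • x := by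
        rw [aux_proj_smul, hpr2, aux_iota_smul_eq _ hcent hιH₀]
      rw [aux_rPhi_eq hΦ hι2 hcent hcos hq' hpr3 τ₂, if_neg hq]
      have he2 : τ₂⁻¹ • ι • τ₁⁻¹ • φ = ι • ((τ₁ * τ₂)⁻¹ • φ) := by
        rw [smul_smul, hcent τ₂⁻¹, mul_smul, he]
      rw [he2]
      by_cases hp : (τ₁ * τ₂)⁻¹ • φ ∈ Φ
      · rw [if_pos hp, if_neg (fun hc => (aux_cm_mem_iff hΦ _).mp hc hp)]
        decide
      · rw [if_neg hp, if_pos ((aux_cm_mem_iff hΦ _).mpr hp)]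
        decide
  · -- restriction to `C` is `r`
    intro a ha
    have hafix : ∀ (τ : Kc ≃ₐ[ℚ] Kc) (y : Kc), y ∈ K₀ → a (τ y) = τ y := by
      intro τ y hy
      apply (IntermediateField.mem_fixingSubgroup_iff _ a).mp ha
      have hmem : τ y ∈ (τ.toAlgHom.comp K₀.val).fieldRange := ⟨⟨y, hy⟩, rfl⟩
      exact le_iSup (fun f : ↥K₀ →ₐ[ℚ] Kc => f.fieldRange) (τ.toAlgHom.comp K₀.val) hmem
    funext x
    obtain ⟨φ, hφ, hpr⟩ := aux_exists_over hfixle hΦ hcent hιH₀ x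
    obtain ⟨t, rfl⟩ := QuotientGroup.mk_surjective φ
    have hx : ((t : Kc ≃ₐ[ℚ] Kc) : (Kc ≃ₐ[ℚ] Kc) ⧸ K₀.fixingSubgroup) = x := by
      exact hpr
    -- `t⁻¹ a t` fixes `K₀`
    have hg0 : ∀ y ∈ K₀, (t⁻¹ * a * t) y = y := by
      intro y hy
      calc (t⁻¹ * a * t) y = t⁻¹ (a (t y)) := by
            rw [AlgEquiv.mul_apply, AlgEquiv.mul_apply]
        _ = t⁻¹ (t y) := by rw [hafix t y hy]
        _ = y := by rw [← AlgEquiv.mul_apply, inv_mul_cancel, AlgEquiv.one_apply]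
    have hg0' : t⁻¹ * a * t ∈ K₀.fixingSubgroup := by
      rw [IntermediateField.mem_fixingSubgroup_iff]
      exact hg0
    have hgs : ∀ w : Kc, (t⁻¹ * a * t) w = w ↔ a (t w) = t w := by
      intro w
      constructor
      · intro h1
        have h2 := congrArg t h1
        rw [← AlgEquiv.mul_apply, show t * (t⁻¹ * a * t) = a * t by group,
          AlgEquiv.mul_apply] at h2
        exact h2
      · intro h1
        calc (t⁻¹ * a * t) w = t⁻¹ (a (t w)) := by
              rw [AlgEquiv.mul_apply, AlgEquiv.mul_apply]
          _ = t⁻¹ (t w) := by rw [h1]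
          _ = w := by rw [← AlgEquiv.mul_apply, inv_mul_cancel, AlgEquiv.one_apply]
    -- the main membership equivalence
    have hmain : a⁻¹ • ((t : Kc ≃ₐ[ℚ] Kc) : (Kc ≃ₐ[ℚ] Kc) ⧸ K.fixingSubgroup) ∈ Φ ↔
        a (t s₀) = t s₀ := by
      constructor
      · intro hm
        have hproj : proj _ _ hfixle
            (((t : Kc ≃ₐ[ℚ] Kc) : (Kc ≃ₐ[ℚ] Kc) ⧸ K.fixingSubgroup)) =
            proj _ _ hfixle (a⁻¹ • ((t : Kc ≃ₐ[ℚ] Kc) : (Kc ≃ₐ[ℚ] Kc) ⧸ K.fixingSubgroup)) := by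
          rw [aux_proj_smul, aux_proj_coe, aux_smul_coe]
          refine (QuotientGroup.eq.mpr ?_).symm
          rw [show (a⁻¹ * t)⁻¹ * t = t⁻¹ * a * t by group]
          exact hg0'
        have heq := aux_unique_over hfixle hΦ hι2 hcent hcos hφ hm hproj
        rw [aux_smul_coe] at heq
        have hmemH : t⁻¹ * a * t ∈ K.fixingSubgroup := by
          have h3 := QuotientGroup.eq.mp heq
          rwa [show (a⁻¹ * t)⁻¹ * t = t⁻¹ * a * t by group] at h3
        exact (hgs s₀).mp ((IntermediateField.mem_fixingSubgroup_iff K _).mp hmemH s₀ hs₀K)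
      · intro hm
        have hmemH : t⁻¹ * a * t ∈ K.fixingSubgroup := key _ hg0' ((hgs s₀).mpr hm)
        have heq : a⁻¹ • ((t : Kc ≃ₐ[ℚ] Kc) : (Kc ≃ₐ[ℚ] Kc) ⧸ K.fixingSubgroup) =
            ((t : Kc ≃ₐ[ℚ] Kc) : (Kc ≃ₐ[ℚ] Kc) ⧸ K.fixingSubgroup) := by
          rw [aux_smul_coe]
          refine QuotientGroup.eq.mpr ?_
          rw [show (a⁻¹ * t)⁻¹ * t = t⁻¹ * a * t by group]
          exact hmemH
        rw [heq]
        exact hφ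
    -- the rmap condition is also equivalent to `a (t s₀) = t s₀`
    have hrmap : (∀ τ : Kc ≃ₐ[ℚ] Kc,
        ((τ : (Kc ≃ₐ[ℚ] Kc) ⧸ K₀.fixingSubgroup) = x) →
          ∀ s : Kc, s ^ 2 = -(τ d) → a s = s) ↔ a (t s₀) = t s₀ := by
      constructor
      · intro h1
        exact h1 t hx (t s₀) (by rw [← map_pow, hs₀sq, map_neg])
      · intro h1 τ hτ s hs
        have hcoset : t⁻¹ * τ ∈ K₀.fixingSubgroup := QuotientGroup.eq.mp (hx.trans hτ.symm)
        have hτd : τ d = t d := by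
          have h2 : (t⁻¹ * τ) d = d :=
            (IntermediateField.mem_fixingSubgroup_iff _ _).mp hcoset d hd
          have h3 := congrArg t h2
          rwa [← AlgEquiv.mul_apply, show t * (t⁻¹ * τ) = τ by group] at h3
        have hs2 : s * s = (t s₀) * (t s₀) := by
          have h2 : s ^ 2 = (t s₀) ^ 2 := by
            rw [hs, ← map_pow, hs₀sq, map_neg, hτd]
          simpa [sq] using h2
        rcases mul_self_eq_mul_self_iff.mp hs2 with h2 | h2
        · rw [h2]; exact h1
        · rw [h2, map_neg, h1]
    rw [aux_rPhi_eq hΦ hι2 hcent hcos hφ hpr a]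
    unfold rmap
    by_cases hc : a (t s₀) = t s₀
    · rw [if_pos (hmain.mpr hc), if_pos (hrmap.mpr hc)]
    · rw [if_neg (fun h => hc (hmain.mp h)), if_neg (fun h => hc (hrmap.mp h))]
end

section
/- For any two CM-types Φ, Φ′ of K there exists f ∈ Ind with r_{Φ′}(τ) = r_Φ(τ) + τ·f − f for all τ ∈ G, so the cohomology class [r_Φ] of the 1-cocycle r_Φ is independent of the CM-type Φ; moreover Φ ↦ r_Φ maps the set of CM-types of K onto the set of 1-cocycles in this class, and r_Φ = r_{Φ′} if and only if Φ′ = Φ or Φ′ = ιΦ. -/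
/- Common combinatorial skeleton for the Galois-theoretic setting of the paper:
`G = Gal(K^c/ℚ)`, `H = Gal(K^c/K)`, `H₀ = Gal(K^c/K₀)`, `ι` the complex conjugation.
Embeddings `K ↪ ℂ` correspond to left cosets `G ⧸ H`, embeddings `K₀ ↪ ℂ` to `G ⧸ H₀`. -/

open Pointwise

variable {G : Type} [Group G]

/-! ### Auxiliary development -/

namespace CMAux

variable {G : Type} [Group G]

/-- Bundled hypotheses on the complex conjugation. -/
structure Data (H H₀ : Subgroup G) (ι : G) : Prop where
  hι2 : ι * ι = 1
  hcent : ∀ g : G, g * ι = ι * g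
  hιH : ι ∉ H
  hιH₀ : ι ∈ H₀
  hcosets : ∀ g : G, g ∈ H₀ ↔ g ∈ H ∨ ι * g ∈ H

variable {H H₀ : Subgroup G} {ι : G}

lemma Data.hinv (S : Data H H₀ ι) : ι⁻¹ = ι := inv_eq_of_mul_eq_one_left S.hι2

lemma smul_mk (g a : G) : g • ((a : G ⧸ H)) = ((g * a : G) : G ⧸ H) := rfl

lemma Data.ii (S : Data H H₀ ι) (φ : G ⧸ H) : ι • ι • φ = φ := by
  rw [smul_smul, S.hι2, one_smul]

lemma Data.calc1 (S : Data H H₀ ι) (a b : G) : (ι * a)⁻¹ * b = ι * (a⁻¹ * b) := by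
  rw [mul_inv_rev, S.hinv, ← mul_assoc, ← S.hcent a⁻¹]

lemma Data.iota_smul_ne (S : Data H H₀ ι) (φ : G ⧸ H) : ι • φ ≠ φ := by
  obtain ⟨g, rfl⟩ := QuotientGroup.mk_surjective φ
  rw [smul_mk, Ne, QuotientGroup.eq, S.calc1, inv_mul_cancel, mul_one]
  exact S.hιH

lemma Data.smul_comm' (S : Data H H₀ ι) (τ : G) (φ : G ⧸ H) : ι • τ • φ = τ • ι • φ := by
  rw [smul_smul, smul_smul, S.hcent]

lemma proj_mk (hle : H ≤ H₀) (a : G) : proj H H₀ hle ((a : G ⧸ H)) = ((a : G ⧸ H₀)) := rfl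

lemma proj_smul (hle : H ≤ H₀) (τ : G) (φ : G ⧸ H) :
    proj H H₀ hle (τ • φ) = τ • proj H H₀ hle φ := by
  obtain ⟨g, rfl⟩ := QuotientGroup.mk_surjective φ
  rfl

lemma Data.proj_iota (S : Data H H₀ ι) (hle : H ≤ H₀) (φ : G ⧸ H) :
    proj H H₀ hle (ι • φ) = proj H H₀ hle φ := by
  obtain ⟨g, rfl⟩ := QuotientGroup.mk_surjective φ
  rw [smul_mk, proj_mk, proj_mk, QuotientGroup.eq, S.calc1, inv_mul_cancel, mul_one]
  exact S.hιH₀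

lemma Data.fiber (S : Data H H₀ ι) (hle : H ≤ H₀) (φ ψ : G ⧸ H) :
    proj H H₀ hle φ = proj H H₀ hle ψ ↔ (ψ = φ ∨ ψ = ι • φ) := by
  obtain ⟨a, rfl⟩ := QuotientGroup.mk_surjective φ
  obtain ⟨b, rfl⟩ := QuotientGroup.mk_surjective ψ
  have e1 : ((b : G ⧸ H) = (a : G ⧸ H)) ↔ a⁻¹ * b ∈ H := by
    rw [eq_comm, QuotientGroup.eq]
  have e2 : ((b : G ⧸ H) = ι • (a : G ⧸ H)) ↔ ι * (a⁻¹ * b) ∈ H := by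
    rw [smul_mk, eq_comm, QuotientGroup.eq, S.calc1]
  rw [proj_mk, proj_mk, QuotientGroup.eq, S.hcosets, ← e1, ← e2]

lemma Data.mem_unique (S : Data H H₀ ι) (hle : H ≤ H₀) {Φ : Set (G ⧸ H)}
    (hΦ : IsCMType H ι Φ) {φ ψ : G ⧸ H} (hφ : φ ∈ Φ) (hψ : ψ ∈ Φ)
    (hp : proj H H₀ hle φ = proj H H₀ hle ψ) : ψ = φ := by
  rcases (S.fiber hle φ ψ).1 hp with h | h
  · exact h
  · rw [h] at hψ
    exact absurd hψ (hΦ.1 φ hφ)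

lemma Data.exists_mem (S : Data H H₀ ι) (hle : H ≤ H₀) {Φ : Set (G ⧸ H)}
    (hΦ : IsCMType H ι Φ) (x : G ⧸ H₀) : ∃ φ, φ ∈ Φ ∧ proj H H₀ hle φ = x := by
  obtain ⟨g, rfl⟩ := QuotientGroup.mk_surjective x
  rcases hΦ.2 (g : G ⧸ H) with h | h
  · exact ⟨_, h, rfl⟩
  · exact ⟨_, h, S.proj_iota hle _⟩

/-- The unique member of the CM-type `Φ` lying over `x`. -/
noncomputable def cmMem (S : Data H H₀ ι) (hle : H ≤ H₀) {Φ : Set (G ⧸ H)}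
    (hΦ : IsCMType H ι Φ) (x : G ⧸ H₀) : G ⧸ H := (S.exists_mem hle hΦ x).choose

lemma cmMem_mem (S : Data H H₀ ι) (hle : H ≤ H₀) {Φ : Set (G ⧸ H)}
    (hΦ : IsCMType H ι Φ) (x : G ⧸ H₀) : cmMem S hle hΦ x ∈ Φ :=
  (S.exists_mem hle hΦ x).choose_spec.1

lemma cmMem_proj (S : Data H H₀ ι) (hle : H ≤ H₀) {Φ : Set (G ⧸ H)}
    (hΦ : IsCMType H ι Φ) (x : G ⧸ H₀) : proj H H₀ hle (cmMem S hle hΦ x) = x :=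
  (S.exists_mem hle hΦ x).choose_spec.2

lemma mem_iff_eq_cmMem (S : Data H H₀ ι) (hle : H ≤ H₀) {Φ : Set (G ⧸ H)}
    (hΦ : IsCMType H ι Φ) {x : G ⧸ H₀} {φ : G ⧸ H} (hp : proj H H₀ hle φ = x) :
    φ ∈ Φ ↔ φ = cmMem S hle hΦ x := by
  constructor
  · intro h
    exact S.mem_unique hle hΦ (cmMem_mem S hle hΦ x) h (by rw [cmMem_proj, hp])
  · intro h
    rw [h]
    exact cmMem_mem S hle hΦ x

open Classical in
lemma Data.rPhi_eq (S : Data H H₀ ι) (hle : H ≤ H₀) {Φ : Set (G ⧸ H)}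
    (hΦ : IsCMType H ι Φ) (τ : G) (x : G ⧸ H₀) :
    rPhi H H₀ hle Φ τ x = if τ⁻¹ • cmMem S hle hΦ x ∈ Φ then 0 else 1 := by
  classical
  simp only [rPhi]
  by_cases hmem : τ⁻¹ • cmMem S hle hΦ x ∈ Φ
  · rw [if_pos hmem, if_pos ⟨cmMem S hle hΦ x, cmMem_mem S hle hΦ x, cmMem_proj S hle hΦ x, hmem⟩]
  · rw [if_neg hmem, if_neg]
    rintro ⟨φ, hφ, hp, hm⟩
    have : φ = cmMem S hle hΦ x := (mem_iff_eq_cmMem S hle hΦ hp).1 hφ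
    rw [this] at hm
    exact hmem hm

open Classical in
/-- The difference cochain of two CM-types. -/
noncomputable def dd (S : Data H H₀ ι) (hle : H ≤ H₀) {Φ Φ' : Set (G ⧸ H)}
    (hΦ : IsCMType H ι Φ) (hΦ' : IsCMType H ι Φ') (x : G ⧸ H₀) : ZMod 2 :=
  if cmMem S hle hΦ' x = cmMem S hle hΦ x then 0 else 1

lemma Data.main (S : Data H H₀ ι) (hle : H ≤ H₀) {Φ Φ' : Set (G ⧸ H)}
    (hΦ : IsCMType H ι Φ) (hΦ' : IsCMType H ι Φ') (τ : G) (x : G ⧸ H₀) :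
    rPhi H H₀ hle Φ' τ x
      = rPhi H H₀ hle Φ τ x + dd S hle hΦ hΦ' (τ⁻¹ • x) - dd S hle hΦ hΦ' x := by
  classical
  have hne : ∀ χ : G ⧸ H, ι • χ ≠ χ := S.iota_smul_ne
  rw [S.rPhi_eq hle hΦ, S.rPhi_eq hle hΦ']
  simp only [dd]
  have hmΦ : τ⁻¹ • cmMem S hle hΦ x ∈ Φ ↔ τ⁻¹ • cmMem S hle hΦ x = cmMem S hle hΦ (τ⁻¹ • x) :=
    mem_iff_eq_cmMem S hle hΦ (by rw [proj_smul, cmMem_proj])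
  have hmΦ' : τ⁻¹ • cmMem S hle hΦ' x ∈ Φ'
      ↔ τ⁻¹ • cmMem S hle hΦ' x = cmMem S hle hΦ' (τ⁻¹ • x) :=
    mem_iff_eq_cmMem S hle hΦ' (by rw [proj_smul, cmMem_proj])
  rw [hmΦ, hmΦ']
  have hb : cmMem S hle hΦ' x = cmMem S hle hΦ x
      ∨ cmMem S hle hΦ' x = ι • cmMem S hle hΦ x :=
    (S.fiber hle _ _).1 (by rw [cmMem_proj, cmMem_proj])
  have hc : cmMem S hle hΦ' (τ⁻¹ • x) = cmMem S hle hΦ (τ⁻¹ • x)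
      ∨ cmMem S hle hΦ' (τ⁻¹ • x) = ι • cmMem S hle hΦ (τ⁻¹ • x) :=
    (S.fiber hle _ _).1 (by rw [cmMem_proj, cmMem_proj])
  have ha : τ⁻¹ • cmMem S hle hΦ x = cmMem S hle hΦ (τ⁻¹ • x)
      ∨ τ⁻¹ • cmMem S hle hΦ x = ι • cmMem S hle hΦ (τ⁻¹ • x) :=
    (S.fiber hle _ _).1 (by rw [cmMem_proj, proj_smul, cmMem_proj])
  set φ := cmMem S hle hΦ x
  set ψ := cmMem S hle hΦ (τ⁻¹ • x)
  rcases hb with hb | hb <;> rcases hc with hc | hc <;> rcases ha with ha | ha <;>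
    rw [hb, hc] <;>
    simp only [← S.smul_comm', ha, S.ii] <;>
    simp only [hne ψ, hne φ, Ne.symm (hne ψ), Ne.symm (hne φ), eq_self_iff_true, if_true,
      if_false] <;>
    simp [hne ψ, hne φ, Ne.symm (hne ψ), Ne.symm (hne φ)] <;>
    decide


lemma Data.rPhi_iota_smul (S : Data H H₀ ι) (hle : H ≤ H₀) (Φ : Set (G ⧸ H)) (τ : G) :
    rPhi H H₀ hle (ι • Φ) τ = rPhi H H₀ hle Φ τ := by
  classical
  have key : ∀ Ψ : Set (G ⧸ H), ∀ x, (∃ φ ∈ Ψ, proj H H₀ hle φ = x ∧ τ⁻¹ • φ ∈ Ψ) →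
      (∃ φ ∈ ι • Ψ, proj H H₀ hle φ = x ∧ τ⁻¹ • φ ∈ ι • Ψ) := by
    rintro Ψ x ⟨φ, hφ, hp, hm⟩
    refine ⟨ι • φ, Set.smul_mem_smul_set hφ, by rw [S.proj_iota hle, hp], ?_⟩
    rw [← S.smul_comm']
    exact Set.smul_mem_smul_set hm
  have hii : ι • ι • Φ = Φ := by rw [smul_smul, S.hι2, one_smul]
  funext x
  simp only [rPhi]
  refine if_congr ⟨fun h => ?_, fun h => key Φ x h⟩ rfl rfl
  have h2 := key (ι • Φ) x h
  rwa [hii] at h2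

lemma Data.section_cm (S : Data H H₀ ι) (hle : H ≤ H₀) (s : (G ⧸ H₀) → G ⧸ H)
    (hs : ∀ x, proj H H₀ hle (s x) = x) :
    IsCMType H ι {φ | φ = s (proj H H₀ hle φ)} := by
  constructor
  · intro φ hφ hmem
    rw [Set.mem_setOf_eq] at hφ
    rw [Set.mem_setOf_eq, S.proj_iota hle] at hmem
    exact S.iota_smul_ne φ (hmem.trans hφ.symm)
  · intro φ
    rcases (S.fiber hle (s (proj H H₀ hle φ)) φ).1 (by rw [hs]) with h | h
    · left; exact h
    · right
      have h2 : ι • φ = ι • ι • s (proj H H₀ hle φ) := congrArg (fun y => ι • y) h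
      rw [S.ii] at h2
      show ι • φ = s (proj H H₀ hle (ι • φ))
      rw [S.proj_iota hle]
      exact h2

open Classical in
lemma Data.part2 (S : Data H H₀ ι) (hle : H ≤ H₀) {Φ : Set (G ⧸ H)} (hΦ : IsCMType H ι Φ)
    (f : (G ⧸ H₀) → ZMod 2) :
    ∃ Φ' : Set (G ⧸ H), ∃ hΦ' : IsCMType H ι Φ', dd S hle hΦ hΦ' = f := by
  classical
  have hz : ∀ a : ZMod 2, a = 0 ∨ a = 1 := by decide
  set s : (G ⧸ H₀) → G ⧸ H := fun x => ι ^ (f x).val • cmMem S hle hΦ x with hsdef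
  have hsx0 : ∀ x, f x = 0 → s x = cmMem S hle hΦ x := by
    intro x h
    simp only [hsdef, h, show ((0 : ZMod 2)).val = 0 from rfl, pow_zero, one_smul]
  have hsx1 : ∀ x, f x = 1 → s x = ι • cmMem S hle hΦ x := by
    intro x h
    simp only [hsdef, h, show ((1 : ZMod 2)).val = 1 from rfl, pow_one]
  have hs : ∀ x, proj H H₀ hle (s x) = x := by
    intro x
    rcases hz (f x) with h | h
    · rw [hsx0 x h, cmMem_proj]
    · rw [hsx1 x h, S.proj_iota hle, cmMem_proj]
  have hΦ' : IsCMType H ι {φ | φ = s (proj H H₀ hle φ)} := S.section_cm hle s hs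
  have hmem' : ∀ x, cmMem S hle hΦ' x = s x := by
    intro x
    refine ((mem_iff_eq_cmMem S hle hΦ' (hs x)).1 ?_).symm
    show s x = s (proj H H₀ hle (s x))
    rw [hs x]
  refine ⟨_, hΦ', funext fun x => ?_⟩
  simp only [dd]
  rw [hmem' x]
  rcases hz (f x) with h | h
  · rw [hsx0 x h, if_pos rfl, h]
  · rw [hsx1 x h, if_neg (S.iota_smul_ne _), h]

end CMAux

/-- For any two CM-types `Φ, Φ′` of `K` there is `f ∈ Ind` with
`r_{Φ′}(τ) = r_Φ(τ) + τ·f − f` for all `τ ∈ G` (so the cohomology class `[r_Φ]` does not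
depend on `Φ`); moreover `Φ ↦ r_Φ` maps the CM-types of `K` onto the set of 1-cocycles in this
class, and `r_Φ = r_{Φ′}` iff `Φ′ = Φ` or `Φ′ = ιΦ`. -/
theorem rPhi_cohomology_class
    {G : Type} [Group G] [Finite G] (H H₀ : Subgroup G) (hle : H ≤ H₀) (ι : G)
    (hι2 : ι * ι = 1) (hι1 : ι ≠ 1) (hcent : ∀ g : G, g * ι = ι * g)
    (hιH : ι ∉ H) (hιH₀ : ι ∈ H₀)
    (hcosets : ∀ g : G, g ∈ H₀ ↔ g ∈ H ∨ ι * g ∈ H) :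
    (∀ Φ Φ' : Set (G ⧸ H), IsCMType H ι Φ → IsCMType H ι Φ' →
        ∃ f : (G ⧸ H₀) → ZMod 2, ∀ τ : G,
          rPhi H H₀ hle Φ' τ = rPhi H H₀ hle Φ τ + indAct H₀ τ f - f) ∧
    (∀ Φ : Set (G ⧸ H), IsCMType H ι Φ → ∀ f : (G ⧸ H₀) → ZMod 2,
        ∃ Φ' : Set (G ⧸ H), IsCMType H ι Φ' ∧ ∀ τ : G,
          rPhi H H₀ hle Φ' τ = rPhi H H₀ hle Φ τ + indAct H₀ τ f - f) ∧
    (∀ Φ Φ' : Set (G ⧸ H), IsCMType H ι Φ → IsCMType H ι Φ' →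
        ((∀ τ : G, rPhi H H₀ hle Φ τ = rPhi H H₀ hle Φ' τ) ↔ (Φ' = Φ ∨ Φ' = ι • Φ))) := by
  have S : CMAux.Data H H₀ ι := ⟨hι2, hcent, hιH, hιH₀, hcosets⟩
  have z2 : ∀ a : ZMod 2, a = 0 ∨ a = 1 := by decide
  refine ⟨?_, ?_, ?_⟩
  · intro Φ Φ' hΦ hΦ'
    exact ⟨CMAux.dd S hle hΦ hΦ', fun τ => funext fun x => S.main hle hΦ hΦ' τ x⟩
  · intro Φ hΦ f
    obtain ⟨Φ', hΦ', hdd⟩ := S.part2 hle hΦ f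
    refine ⟨Φ', hΦ', fun τ => funext fun x => ?_⟩
    rw [← hdd]
    exact S.main hle hΦ hΦ' τ x
  · intro Φ Φ' hΦ hΦ'
    constructor
    · intro h
      have key : ∀ (τ : G) (x : G ⧸ H₀),
          CMAux.dd S hle hΦ hΦ' (τ⁻¹ • x) = CMAux.dd S hle hΦ hΦ' x := by
        intro τ x
        have e := S.main hle hΦ hΦ' τ x
        rw [← congrFun (h τ) x] at e
        linear_combination -e
      have hconst : ∀ x, CMAux.dd S hle hΦ hΦ' x
          = CMAux.dd S hle hΦ hΦ' (((1 : G) : G ⧸ H₀)) := by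
        intro x
        obtain ⟨g, rfl⟩ := QuotientGroup.mk_surjective x
        have h2 := key g⁻¹ (((1 : G) : G ⧸ H₀))
        rw [show (g⁻¹)⁻¹ • (((1 : G) : G ⧸ H₀)) = ((g : G ⧸ H₀)) from by
          rw [inv_inv]; show ((g * 1 : G) : G ⧸ H₀) = _; rw [mul_one]] at h2
        exact h2
      rcases z2 (CMAux.dd S hle hΦ hΦ' (((1 : G) : G ⧸ H₀))) with hd | hd
      · left
        have hmm : ∀ x, CMAux.cmMem S hle hΦ' x = CMAux.cmMem S hle hΦ x := by
          intro x
          by_contra hne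
          have h1 : CMAux.dd S hle hΦ hΦ' x = 1 := by
            simp only [CMAux.dd]; rw [if_neg hne]
          rw [hconst x, hd] at h1
          exact absurd h1 (by decide)
        ext φ
        rw [CMAux.mem_iff_eq_cmMem S hle hΦ' (rfl : proj H H₀ hle φ = proj H H₀ hle φ),
          CMAux.mem_iff_eq_cmMem S hle hΦ (rfl : proj H H₀ hle φ = proj H H₀ hle φ), hmm]
      · right
        have hmm : ∀ x, CMAux.cmMem S hle hΦ' x = ι • CMAux.cmMem S hle hΦ x := by
          intro x
          have h1 : CMAux.dd S hle hΦ hΦ' x = 1 := by rw [hconst x, hd]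
          have hne : CMAux.cmMem S hle hΦ' x ≠ CMAux.cmMem S hle hΦ x := by
            intro he
            have h0 : CMAux.dd S hle hΦ hΦ' x = 0 := by
              simp only [CMAux.dd]; rw [if_pos he]
            rw [h0] at h1
            exact absurd h1 (by decide)
          rcases (S.fiber hle (CMAux.cmMem S hle hΦ x) (CMAux.cmMem S hle hΦ' x)).1
              (by rw [CMAux.cmMem_proj, CMAux.cmMem_proj]) with h' | h'
          · exact absurd h' hne
          · exact h'
        ext φ
        rw [CMAux.mem_iff_eq_cmMem S hle hΦ' (rfl : proj H H₀ hle φ = proj H H₀ hle φ),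
          hmm, Set.mem_smul_set_iff_inv_smul_mem, S.hinv,
          CMAux.mem_iff_eq_cmMem S hle hΦ (S.proj_iota hle φ)]
        constructor <;> intro hh
        · rw [hh, S.ii, S.proj_iota hle, CMAux.cmMem_proj]
        · rw [← hh, S.ii]
    · rintro (rfl | rfl)
      · intro τ; rfl
      · intro τ
        exact (S.rPhi_iota_smul hle Φ τ).symm
end

section
/- For any CM-type Φ of K, the map ρ_Φ : G → Ind ⋊ G₀ given by τ ↦ (r_Φ(τ), ρ(τ)) is an injective group homomorphism, where ρ : G → G₀ is the canonical epimorphism and Ind ⋊ G₀ is the semidirect product with multiplication (f, σ)(f′, σ′) = (f + σ·f′, σσ′). -/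
/- Common combinatorial skeleton for the Galois-theoretic setting of the paper:
`G = Gal(K^c/ℚ)`, `H = Gal(K^c/K)`, `H₀ = Gal(K^c/K₀)`, `ι` the complex conjugation.
Embeddings `K ↪ ℂ` correspond to left cosets `G ⧸ H`, embeddings `K₀ ↪ ℂ` to `G ⧸ H₀`. -/

open Pointwise

variable {G : Type} [Group G]

section AuxLemmas

variable {G : Type} [Group G] (H H₀ : Subgroup G) (hle : H ≤ H₀) (ι : G)

lemma proj_smul' (g : G) (φ : G ⧸ H) :
    proj H H₀ hle (g • φ) = g • proj H H₀ hle φ := by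
  induction φ using QuotientGroup.induction_on
  rfl

lemma proj_iota_smul (hι2 : ι * ι = 1) (hcent : ∀ g : G, g * ι = ι * g) (hιH₀ : ι ∈ H₀)
    (φ : G ⧸ H) : proj H H₀ hle (ι • φ) = proj H H₀ hle φ := by
  induction φ using QuotientGroup.induction_on with
  | _ a =>
    show ((ι * a : G) : G ⧸ H₀) = (a : G ⧸ H₀)
    rw [QuotientGroup.eq]
    have : (ι * a)⁻¹ * a = a⁻¹ * ι⁻¹ * a := by group
    rw [this, inv_eq_of_mul_eq_one_right hι2]
    have : a⁻¹ * ι * a = ι := by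
      rw [mul_assoc, ← hcent a]; group
    rw [this]; exact hιH₀

lemma same_fiber (hcent : ∀ g : G, g * ι = ι * g)
    (hcosets : ∀ g : G, g ∈ H₀ ↔ g ∈ H ∨ ι * g ∈ H)
    (φ ψ : G ⧸ H) (h : proj H H₀ hle ψ = proj H H₀ hle φ) :
    ψ = φ ∨ ψ = ι • φ := by
  induction φ using QuotientGroup.induction_on with
  | _ b =>
  induction ψ using QuotientGroup.induction_on with
  | _ a =>
  have h' : a⁻¹ * b ∈ H₀ := QuotientGroup.eq.mp h
  rcases (hcosets _).mp h' with h1 | h1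
  · exact Or.inl ((QuotientGroup.eq).mpr h1)
  · right
    show (a : G ⧸ H) = ((ι * b : G) : G ⧸ H)
    rw [QuotientGroup.eq]
    have : a⁻¹ * (ι * b) = ι * (a⁻¹ * b) := by rw [← mul_assoc, hcent a⁻¹]; group
    rw [this]; exact h1

lemma iota_smul_iota_smul (hι2 : ι * ι = 1) (φ : G ⧸ H) : ι • ι • φ = φ := by
  rw [smul_smul, hι2, one_smul]

lemma smul_iota_smul (hcent : ∀ g : G, g * ι = ι * g) (g : G) (φ : G ⧸ H) :
    g • ι • φ = ι • g • φ := by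
  rw [smul_smul, smul_smul, hcent g]

lemma mem_iff_iota_not_mem (hι2 : ι * ι = 1) {Φ : Set (G ⧸ H)} (hΦ : IsCMType H ι Φ)
    (φ : G ⧸ H) : ι • φ ∈ Φ ↔ φ ∉ Φ := by
  constructor
  · intro h1 h2
    exact hΦ.1 φ h2 h1
  · intro h1
    rcases hΦ.2 φ with h | h
    · exact absurd h h1
    · exact h

open Classical in
lemma rPhi_apply {Φ : Set (G ⧸ H)} (hι2 : ι * ι = 1) (hΦ : IsCMType H ι Φ)
    (hcent : ∀ g : G, g * ι = ι * g)
    (hcosets : ∀ g : G, g ∈ H₀ ↔ g ∈ H ∨ ι * g ∈ H)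
    (τ : G) {φ : G ⧸ H} (hφ : φ ∈ Φ) :
    rPhi H H₀ hle Φ τ (proj H H₀ hle φ) = if τ⁻¹ • φ ∈ Φ then 0 else 1 := by
  unfold rPhi
  by_cases hc : τ⁻¹ • φ ∈ Φ
  · rw [if_pos hc, if_pos ⟨φ, hφ, rfl, hc⟩]
  · rw [if_neg hc, if_neg]
    rintro ⟨φ', hφ', hproj, hτφ'⟩
    rcases same_fiber H H₀ hle ι hcent hcosets φ φ' hproj with h | h
    · exact hc (h ▸ hτφ')
    · exact hΦ.1 φ hφ (h ▸ hφ')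

end AuxLemmas

/-- For any CM-type `Φ` of `K`, the map
`ρ_Φ : G → Ind ⋊ G₀`, `τ ↦ (r_Φ(τ), ρ(τ))` (with `ρ : G → G₀ = G/C` the canonical epimorphism
and `C = Gal(K^c/K₀^c) = ⋂_τ τH₀τ⁻¹` the normal core of `H₀`) is an injective group
homomorphism for the semidirect multiplication `(f, σ)(f′, σ′) = (f + σ·f′, σσ′)`. -/
theorem rhoPhi_injective_hom
    {G : Type} [Group G] [Finite G] (H H₀ : Subgroup G) (hle : H ≤ H₀) (ι : G)
    (hι2 : ι * ι = 1) (hι1 : ι ≠ 1) (hcent : ∀ g : G, g * ι = ι * g)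
    (hιH : ι ∉ H) (hιH₀ : ι ∈ H₀)
    (hcosets : ∀ g : G, g ∈ H₀ ↔ g ∈ H ∨ ι * g ∈ H)
    (hfaithful : H.normalCore = ⊥)
    (Φ : Set (G ⧸ H)) (hΦ : IsCMType H ι Φ) :
    Function.Injective
        (fun τ : G =>
          ((rPhi H H₀ hle Φ τ, (τ : G ⧸ H₀.normalCore)) :
            ((G ⧸ H₀) → ZMod 2) × (G ⧸ H₀.normalCore))) ∧
    (∀ τ₁ τ₂ : G,
        rPhi H H₀ hle Φ (τ₁ * τ₂) = rPhi H H₀ hle Φ τ₁ + indAct H₀ τ₁ (rPhi H H₀ hle Φ τ₂)) := by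
  classical
  -- every H₀-coset has a member of Φ above it
  have hexists : ∀ x : G ⧸ H₀, ∃ φ ∈ Φ, proj H H₀ hle φ = x := by
    intro x
    induction x using QuotientGroup.induction_on with
    | _ g =>
      rcases hΦ.2 ((g : G ⧸ H)) with h | h
      · exact ⟨(g : G ⧸ H), h, rfl⟩
      · exact ⟨ι • (g : G ⧸ H), h, proj_iota_smul H H₀ hle ι hι2 hcent hιH₀ _⟩
  -- cocycle identity
  have hcocycle : ∀ τ₁ τ₂ : G,
      rPhi H H₀ hle Φ (τ₁ * τ₂) = rPhi H H₀ hle Φ τ₁ + indAct H₀ τ₁ (rPhi H H₀ hle Φ τ₂) := by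
    intro τ₁ τ₂
    funext x
    obtain ⟨φ, hφ, rfl⟩ := hexists x
    have h1 := rPhi_apply H H₀ hle ι hι2 hΦ hcent hcosets (τ₁ * τ₂) hφ
    have h2 := rPhi_apply H H₀ hle ι hι2 hΦ hcent hcosets τ₁ hφ
    have hproj1 : proj H H₀ hle (τ₁⁻¹ • φ) = τ₁⁻¹ • proj H H₀ hle φ :=
      proj_smul' H H₀ hle τ₁⁻¹ φ
    have hshift : indAct H₀ τ₁ (rPhi H H₀ hle Φ τ₂) (proj H H₀ hle φ)
        = rPhi H H₀ hle Φ τ₂ (τ₁⁻¹ • proj H H₀ hle φ) := rfl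
    have hmulinv : (τ₁ * τ₂)⁻¹ • φ = τ₂⁻¹ • τ₁⁻¹ • φ := by
      rw [smul_smul, mul_inv_rev]
    by_cases hA : τ₁⁻¹ • φ ∈ Φ
    · -- the fiber member over τ₁⁻¹ • x is τ₁⁻¹ • φ
      have h3 := rPhi_apply H H₀ hle ι hι2 hΦ hcent hcosets τ₂ hA
      rw [hproj1] at h3
      rw [Pi.add_apply, h1, h2, hshift, h3, if_pos hA, hmulinv, zero_add]
    · have hB : ι • τ₁⁻¹ • φ ∈ Φ :=
        (mem_iff_iota_not_mem H ι hι2 hΦ _).mpr hA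
      have h3 := rPhi_apply H H₀ hle ι hι2 hΦ hcent hcosets τ₂ hB
      rw [proj_iota_smul H H₀ hle ι hι2 hcent hιH₀, hproj1] at h3
      have hcomm : τ₂⁻¹ • ι • τ₁⁻¹ • φ = ι • τ₂⁻¹ • τ₁⁻¹ • φ :=
        smul_iota_smul H ι hcent τ₂⁻¹ _
      rw [hcomm] at h3
      have hiff : ι • τ₂⁻¹ • τ₁⁻¹ • φ ∈ Φ ↔ τ₂⁻¹ • τ₁⁻¹ • φ ∉ Φ :=
        mem_iff_iota_not_mem H ι hι2 hΦ _
      rw [Pi.add_apply, h1, h2, hshift, h3, if_neg hA, hmulinv]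
      by_cases hc : τ₂⁻¹ • τ₁⁻¹ • φ ∈ Φ
      · rw [if_pos hc, if_neg (fun h => (hiff.mp h) hc)]; decide
      · rw [if_neg hc, if_pos (hiff.mpr hc)]; decide
  refine ⟨?_, hcocycle⟩
  -- injectivity
  intro τ₁ τ₂ heq
  simp only [Prod.mk.injEq] at heq
  obtain ⟨hr, hq⟩ := heq
  set τ : G := τ₁⁻¹ * τ₂ with hτdef
  have hτcore : τ ∈ H₀.normalCore := QuotientGroup.eq.mp hq
  have hτ2 : τ₂ = τ₁ * τ := by rw [hτdef]; group
  have hrz : rPhi H H₀ hle Φ τ = 0 := by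
    have := hcocycle τ₁ τ
    rw [← hτ2, ← hr] at this
    have h0 : indAct H₀ τ₁ (rPhi H H₀ hle Φ τ) = 0 := by
      have := congrArg (fun f => -(rPhi H H₀ hle Φ τ₁) + f) this
      simpa using this.symm
    funext x
    have := congrFun h0 (τ₁ • x)
    simpa [indAct, inv_smul_smul] using this
  -- τ fixes every coset of H
  have hfix : ∀ ψ : G ⧸ H, τ⁻¹ • ψ = ψ := by
    have key : ∀ φ ∈ Φ, τ⁻¹ • φ = φ := by
      intro φ hφ
      have h1 := rPhi_apply H H₀ hle ι hι2 hΦ hcent hcosets τ hφ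
      rw [hrz] at h1
      have h2 : τ⁻¹ • φ ∈ Φ := by
        by_contra hc
        rw [if_neg hc] at h1
        exact one_ne_zero h1.symm
      -- τ⁻¹ • φ lies in the same fiber as φ
      have hproj : proj H H₀ hle (τ⁻¹ • φ) = proj H H₀ hle φ := by
        rw [proj_smul' H H₀ hle]
        induction φ using QuotientGroup.induction_on with
        | _ g =>
          show ((τ⁻¹ * g : G) : G ⧸ H₀) = (g : G ⧸ H₀)
          rw [QuotientGroup.eq]
          have hm : (τ⁻¹ * g)⁻¹ * g = g⁻¹ * τ * g := by group
          rw [hm]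
          have := hτcore g⁻¹
          simpa using this
      rcases same_fiber H H₀ hle ι hcent hcosets φ _ hproj with h | h
      · exact h
      · exact absurd (h ▸ h2) (hΦ.1 φ hφ)
    intro ψ
    rcases hΦ.2 ψ with h | h
    · exact key ψ h
    · have := key _ h
      rw [smul_iota_smul H ι hcent τ⁻¹ ψ] at this
      have := congrArg (fun z => ι • z) this
      simpa [iota_smul_iota_smul H ι hι2] using this
  -- hence τ ∈ H.normalCore = ⊥
  have hτH : τ ∈ H.normalCore := by
    intro b
    have := hfix ((b⁻¹ : G) : G ⧸ H)
    have h' : ((τ⁻¹ * b⁻¹ : G) : G ⧸ H) = ((b⁻¹ : G) : G ⧸ H) := this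
    have hm := QuotientGroup.eq.mp h'
    have : (τ⁻¹ * b⁻¹)⁻¹ * b⁻¹ = b * τ * b⁻¹ := by group
    rwa [this] at hm
  rw [hfaithful, Subgroup.mem_bot] at hτH
  have : τ₂ = τ₁ := by rw [hτ2, hτH, mul_one]
  exact this.symm
end

section
/- Let Λ be a system of representatives for the conjugacy classes of the CM-types of K. Then the sum of the degrees over ℚ of the reflex fields K̃(Φ) for Φ ∈ Λ equals 2^N, i.e. Σ_{Φ∈Λ} [K̃(Φ) : ℚ] = 2^N. -/
/- Common combinatorial skeleton for the Galois-theoretic setting of the paper: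
`G = Gal(K^c/ℚ)`, `H = Gal(K^c/K)`, `H₀ = Gal(K^c/K₀)`, `ι` the complex conjugation.
Embeddings `K ↪ ℂ` correspond to left cosets `G ⧸ H`, embeddings `K₀ ↪ ℂ` to `G ⧸ H₀`. -/

open Pointwise

variable {G : Type} [Group G]

section Involution
variable {X : Type} (e : X → X) (he : ∀ x, e (e x) = x) (hne : ∀ x, e x ≠ x)

def pairSetoid : Setoid X where
  r x y := y = x ∨ y = e x
  iseqv := by
    refine ⟨fun x => Or.inl rfl, ?_, ?_⟩
    · rintro x y (rfl | rfl)
      · exact Or.inl rfl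
      · exact Or.inr (he x).symm
    · rintro x y z (rfl | rfl) h
      · exact h
      · rcases h with rfl | rfl
        · exact Or.inr rfl
        · exact Or.inl (he x)

noncomputable def pairEquiv : X ≃ Quotient (pairSetoid e he) × Bool := by
  classical
  refine
  { toFun := fun x => (Quotient.mk _ x, decide (x = (Quotient.mk (pairSetoid e he) x).out))
    invFun := fun p => if p.2 then p.1.out else e p.1.out
    left_inv := ?_, right_inv := ?_ }
  · intro x
    have hout : x = (Quotient.mk (pairSetoid e he) x).out ∨
        x = e (Quotient.mk (pairSetoid e he) x).out :=
      Quotient.mk_out (s := pairSetoid e he) x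
    rcases hout with h | h
    · simp [← h]
    · have hxne : x ≠ (Quotient.mk (pairSetoid e he) x).out :=
        fun hc => hne _ (h.symm.trans hc)
      simp [hxne, ← h]
  · rintro ⟨q, b⟩
    have hq : ∀ y : X, Quotient.mk (pairSetoid e he) (e y) = Quotient.mk (pairSetoid e he) y :=
      fun y => Quotient.sound (Or.inr (he y).symm)
    cases b
    · have h1 : Quotient.mk (pairSetoid e he) (e q.out) = q := by rw [hq, Quotient.out_eq]
      have h2 : e q.out ≠ (Quotient.mk (pairSetoid e he) (e q.out)).out := by
        rw [h1]; exact hne q.out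
      simp [h1, h2, hne q.out]
    · have h1 : Quotient.mk (pairSetoid e he) q.out = q := Quotient.out_eq q
      simp [h1]

/-- CM-types (relative to the involution `e`) biject with `Q → Bool`. -/
noncomputable def cmEquiv :
    {Φ : Set X // ∀ x, (x ∈ Φ ↔ e x ∉ Φ)} ≃ (Quotient (pairSetoid e he) → Bool) := by
  classical
  refine
  { toFun := fun Φ q => decide (q.out ∈ Φ.1)
    invFun := fun f =>
      ⟨{x | x = (Quotient.mk (pairSetoid e he) x).out ↔
          f (Quotient.mk _ x) = true}, ?_⟩
    left_inv := ?_, right_inv := ?_ }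
  · intro x
    have hq : Quotient.mk (pairSetoid e he) (e x) = Quotient.mk (pairSetoid e he) x :=
      Quotient.sound (Or.inr (he x).symm)
    simp only [Set.mem_setOf_eq, hq]
    have hout : x = (Quotient.mk (pairSetoid e he) x).out ∨
        x = e (Quotient.mk (pairSetoid e he) x).out :=
      Quotient.mk_out (s := pairSetoid e he) x
    rcases hout with h | h
    · -- out = x, so e x ≠ out
      have hexne : e x ≠ (Quotient.mk (pairSetoid e he) x).out := by
        rw [← h]; exact hne x
      constructor
      · intro h1 hc
        exact hexne (hc.mpr (h1.mp h))
      · intro h1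
        have hf : f (Quotient.mk (pairSetoid e he) x) = true := by
          by_contra hf
          exact h1 (iff_of_false hexne hf)
        exact iff_of_true h hf
    · -- out = e x
      have hxne : x ≠ (Quotient.mk (pairSetoid e he) x).out :=
        fun hc => hne _ (h.symm.trans hc)
      have hexeq : e x = (Quotient.mk (pairSetoid e he) x).out := by
        have := congrArg e h
        rwa [he] at this
      constructor
      · intro h1
        have hf : f (Quotient.mk (pairSetoid e he) x) ≠ true := fun hf => hxne (h1.mpr hf)
        exact fun hc => hf ((iff_true_left hexeq).mp hc)
      · intro h1
        refine iff_of_false hxne (fun hf => h1 ?_)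
        exact (iff_true_left hexeq).mpr hf
  · rintro ⟨Φ, hΦ⟩
    apply Subtype.ext
    ext x
    simp only [Set.mem_setOf_eq, decide_eq_true_eq]
    have hout : x = (Quotient.mk (pairSetoid e he) x).out ∨
        x = e (Quotient.mk (pairSetoid e he) x).out :=
      Quotient.mk_out (s := pairSetoid e he) x
    rcases hout with h | h
    · constructor
      · intro h1; rw [h]; exact h1.mp h
      · intro h2; exact iff_of_true h (h ▸ h2)
    · have hxne : x ≠ (Quotient.mk (pairSetoid e he) x).out :=
        fun hc => hne _ (h.symm.trans hc)
      constructor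
      · intro h1
        have hno : (Quotient.mk (pairSetoid e he) x).out ∉ Φ := fun ho => hxne (h1.mpr ho)
        have : e (Quotient.mk (pairSetoid e he) x).out ∈ Φ := by
          by_contra hc
          exact hno ((hΦ _).mpr hc)
        rwa [← h] at this
      · intro h2
        exact iff_of_false hxne (fun ho => (hΦ _).mp ho (h ▸ h2))
  · intro f
    funext q
    have h1 : Quotient.mk (pairSetoid e he) q.out = q := Quotient.out_eq q
    simp [h1]

end Involution

open Pointwise

theorem sum_degrees_reflex_fields_aux
    {G : Type} [Group G] [Finite G] (H H₀ : Subgroup G) (hle : H ≤ H₀) (ι : G)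
    (hι2 : ι * ι = 1) (hι1 : ι ≠ 1) (hcent : ∀ g : G, g * ι = ι * g)
    (hιH : ι ∉ H) (hιH₀ : ι ∈ H₀)
    (hcosets : ∀ g : G, g ∈ H₀ ↔ g ∈ H ∨ ι * g ∈ H)
    (hfaithful : H.normalCore = ⊥)
    (N : ℕ) (hN : Nat.card (G ⧸ H₀) = N) (hN2 : Nat.card (G ⧸ H) = 2 * N)
    (Λ : Finset (Set (G ⧸ H)))
    (hΛCM : ∀ Φ ∈ Λ, (fun Φ => (∀ φ ∈ Φ, ι • φ ∉ Φ) ∧ ∀ φ : G ⧸ H, φ ∈ Φ ∨ ι • φ ∈ Φ) Φ)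
    (hΛrep : ∀ Φ : Set (G ⧸ H), ((∀ φ ∈ Φ, ι • φ ∉ Φ) ∧ ∀ φ : G ⧸ H, φ ∈ Φ ∨ ι • φ ∈ Φ) →
      ∃ Φ' ∈ Λ, ∃ τ : G, Φ = τ • Φ')
    (hΛuniq : ∀ Φ ∈ Λ, ∀ Φ' ∈ Λ, (∃ τ : G, Φ' = τ • Φ) → Φ = Φ') :
    ∑ Φ ∈ Λ, (MulAction.stabilizer G {g : G | (g : G ⧸ H) ∈ Φ}).index = 2 ^ N := by
  classical
  set IsCM : Set (G ⧸ H) → Prop :=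
    fun Φ => (∀ φ ∈ Φ, ι • φ ∉ Φ) ∧ ∀ φ : (G ⧸ H), φ ∈ Φ ∨ ι • φ ∈ Φ with hIsCM
  -- the involution
  set e : (G ⧸ H) → (G ⧸ H) := fun φ => ι • φ with hedef
  have he : ∀ x, e (e x) = x := by
    intro x; simp only [hedef, smul_smul, hι2, one_smul]
  have hιinv : ι⁻¹ = ι := inv_eq_of_mul_eq_one_right hι2
  have hne : ∀ x, e x ≠ x := by
    intro x hx
    induction x using QuotientGroup.induction_on with
    | H g =>
      have : ((ι * g : G) : G ⧸ H) = (g : G ⧸ H) := hx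
      rw [QuotientGroup.eq] at this
      apply hιH
      have h2 : (ι * g)⁻¹ * g = g⁻¹ * ι⁻¹ * g := by group
      rw [h2, hιinv] at this
      have h3 : g⁻¹ * ι * g = ι := by
        rw [hcent g⁻¹]
        group
      rwa [h3] at this
  -- characterization of CM-types
  have hchar : ∀ Φ : Set (G ⧸ H), IsCM Φ ↔ ∀ x, (x ∈ Φ ↔ e x ∉ Φ) := by
    intro Φ
    constructor
    · rintro ⟨h1, h2⟩ x
      exact ⟨h1 x, fun hx => (h2 x).resolve_right hx⟩
    · intro hP
      exact ⟨fun φ hφ => (hP φ).mp hφ, fun φ => by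
        by_cases hφ : φ ∈ Φ
        · exact Or.inl hφ
        · exact Or.inr (not_not.mp (fun hc => hφ ((hP φ).mpr hc)))⟩
  -- cardinality of the set of CM-types
  have hbool : Nat.card Bool = 2 := Nat.card_eq_fintype_card.trans rfl
  have hcardQ : Nat.card (Quotient (pairSetoid e he)) = N := by
    have h1 : Nat.card (G ⧸ H) = Nat.card (Quotient (pairSetoid e he)) * 2 := by
      rw [Nat.card_congr (pairEquiv e he hne), Nat.card_prod, hbool]
    rw [hN2] at h1
    omega
  have hcardCM : Nat.card {Φ : Set (G ⧸ H) // ∀ x, (x ∈ Φ ↔ e x ∉ Φ)} = 2 ^ N := by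
    rw [Nat.card_congr (cmEquiv e he hne), Nat.card_fun, hbool, hcardQ]
  -- the set of CM types as a Finset
  have hcardCM' : ({Φ : Set (G ⧸ H) | IsCM Φ}).ncard = 2 ^ N := by
    rw [← Nat.card_coe_set_eq, ← hcardCM]
    apply Nat.card_congr
    exact Equiv.subtypeEquivRight (fun Φ => hchar Φ)
  -- stabilizer of S_Φ equals stabilizer of Φ
  have hstab : ∀ Φ : Set (G ⧸ H), MulAction.stabilizer G {g : G | (g : (G ⧸ H)) ∈ Φ}
      = MulAction.stabilizer G Φ := by
    intro Φ
    ext σ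
    simp only [MulAction.mem_stabilizer_iff]
    have key : σ • {g : G | (g : (G ⧸ H)) ∈ Φ} = {g : G | (g : (G ⧸ H)) ∈ σ • Φ} := by
      ext g
      rw [Set.mem_smul_set_iff_inv_smul_mem]
      simp only [Set.mem_setOf_eq, smul_eq_mul]
      rw [Set.mem_smul_set_iff_inv_smul_mem]
      constructor
      · intro hg; exact hg
      · intro hg; exact hg
    rw [key]
    constructor
    · intro h
      ext φ
      induction φ using QuotientGroup.induction_on with
      | H g =>
        have := Set.ext_iff.mp h g
        simpa using this
    · intro h; rw [h]
  -- orbits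
  set O : Set (G ⧸ H) → Finset (Set (G ⧸ H)) :=
    fun Φ => (MulAction.orbit G Φ).toFinite.toFinset with hO
  have hOmem : ∀ Φ Ψ : Set (G ⧸ H), Ψ ∈ O Φ ↔ Ψ ∈ MulAction.orbit G Φ :=
    fun Φ Ψ => Set.Finite.mem_toFinset _
  have horbCM : ∀ Φ, IsCM Φ → ∀ Ψ ∈ MulAction.orbit G Φ, IsCM Ψ := by
    rintro Φ hΦ Ψ ⟨τ, rfl⟩
    rw [hchar] at hΦ ⊢
    intro x
    rw [Set.mem_smul_set_iff_inv_smul_mem, Set.mem_smul_set_iff_inv_smul_mem]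
    have hcomm : τ⁻¹ • (e x) = e (τ⁻¹ • x) := by
      simp only [hedef, smul_smul, hcent τ⁻¹]
    rw [hcomm]
    exact hΦ (τ⁻¹ • x)
  have hcover : {Φ : Set (G ⧸ H) | IsCM Φ}.toFinite.toFinset = Λ.biUnion O := by
    ext Ψ
    simp only [Set.Finite.mem_toFinset, Set.mem_setOf_eq, Finset.mem_biUnion, hOmem]
    constructor
    · intro hΨ
      obtain ⟨Φ', hΦ', τ, hτ⟩ := hΛrep Ψ hΨ
      exact ⟨Φ', hΦ', ⟨τ, hτ.symm⟩⟩
    · rintro ⟨Φ, hΦ, hΨ⟩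
      exact horbCM Φ (hΛCM Φ hΦ) Ψ hΨ
  have hdisj : ∀ Φ ∈ Λ, ∀ Φ' ∈ Λ, Φ ≠ Φ' → Disjoint (O Φ) (O Φ') := by
    intro Φ hΦ Φ' hΦ' hne'
    rw [Finset.disjoint_left]
    intro Ψ h1 h2
    rw [hOmem] at h1
    rw [hOmem] at h2
    have : MulAction.orbit G Ψ = MulAction.orbit G Φ := MulAction.orbit_eq_iff.mpr h1
    have h3 : Φ' ∈ MulAction.orbit G Φ := by
      rw [← this]
      exact MulAction.orbit_eq_iff.mpr h2 ▸ MulAction.mem_orbit_self Φ'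
    obtain ⟨τ, hτ⟩ := h3
    exact hne' (hΛuniq Φ hΦ Φ' hΦ' ⟨τ, hτ.symm⟩)
  calc ∑ Φ ∈ Λ, (MulAction.stabilizer G {g : G | (g : (G ⧸ H)) ∈ Φ}).index
      = ∑ Φ ∈ Λ, (O Φ).card := by
        refine Finset.sum_congr rfl (fun Φ _ => ?_)
        rw [hstab Φ, MulAction.index_stabilizer, hO]
        exact Set.ncard_eq_toFinset_card _ _
    _ = (Λ.biUnion O).card := (Finset.card_biUnion hdisj).symm
    _ = ({Φ : Set (G ⧸ H) | IsCM Φ}).ncard := by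
        rw [← hcover, Set.ncard_eq_toFinset_card]
    _ = 2 ^ N := hcardCM'

/-- If `Λ` is a system of representatives for the conjugacy classes of the
CM-types of `K` (where `[K : ℚ] = 2N`), then the sum of the degrees over `ℚ` of the reflex
fields `K̃(Φ)`, `Φ ∈ Λ`, equals `2^N`.  By the Galois correspondence,
`[K̃(Φ) : ℚ] = [G : H̃(Φ)]`, the index of `H̃(Φ)` in `G`. -/
theorem sum_degrees_reflex_fields
    {G : Type} [Group G] [Finite G] (H H₀ : Subgroup G) (hle : H ≤ H₀) (ι : G)
    (hι2 : ι * ι = 1) (hι1 : ι ≠ 1) (hcent : ∀ g : G, g * ι = ι * g)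
    (hιH : ι ∉ H) (hιH₀ : ι ∈ H₀)
    (hcosets : ∀ g : G, g ∈ H₀ ↔ g ∈ H ∨ ι * g ∈ H)
    (hfaithful : H.normalCore = ⊥)
    (N : ℕ) (hN : Nat.card (G ⧸ H₀) = N) (hN2 : Nat.card (G ⧸ H) = 2 * N)
    (Λ : Finset (Set (G ⧸ H)))
    (hΛCM : ∀ Φ ∈ Λ, IsCMType H ι Φ)
    (hΛrep : ∀ Φ : Set (G ⧸ H), IsCMType H ι Φ → ∃ Φ' ∈ Λ, ∃ τ : G, Φ = τ • Φ')
    (hΛuniq : ∀ Φ ∈ Λ, ∀ Φ' ∈ Λ, (∃ τ : G, Φ' = τ • Φ) → Φ = Φ') :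
    ∑ Φ ∈ Λ, (Htilde H Φ).index = 2 ^ N :=
  sum_degrees_reflex_fields_aux H H₀ hle ι hι2 hι1 hcent hιH hιH₀ hcosets hfaithful
    N hN hN2 Λ hΛCM hΛrep hΛuniq
end
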